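/- For every γ ∈ (0, 1), ε ∈ (0, 1), δ ∈ (0, 1), and y ∈ ℝ, with g_{y,γ}(κ) = (1−κ)^{−1/2} [1 + (γ−1)κ]⁻¹ exp(−y²κ/2) on (0, 1), the following bound holds: ∫_ε^1 g_{y,γ}(κ) dκ / ∫₀¹ g_{y,γ}(κ) dκ ≤ exp(−y² ε (1 − δ)/2) · γ⁻¹ · 2 (1 − ε)^{1/2} / (δ ε). -/

import Mathlib

open Real MeasureTheory

/-- The unnormalized posterior density of the shrinkage parameter `κ` under the conditional
`TPB(1/2, 1/2, γ)` prior and the marginal likelihood `[y | κ] ~ N(0, κ⁻¹)`: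
`g_{y,γ}(κ) = (1−κ)^{−1/2} [1 + (γ−1)κ]⁻¹ exp(−y²κ/2)`. -/
noncomputable def gPost (y γ κ : ℝ) : ℝ :=
  (1 - κ) ^ (-(1:ℝ)/2) * (1 + (γ - 1) * κ)⁻¹ * Real.exp (-y ^ 2 * κ / 2)

lemma hIntH : IntegrableOn (fun κ : ℝ => (1 - κ) ^ (-(1:ℝ)/2)) (Set.Ioo (0:ℝ) 1) := by
  have hII : IntervalIntegrable (fun x : ℝ => x ^ (-(1:ℝ)/2)) volume 0 1 :=
    intervalIntegral.intervalIntegrable_rpow' (by norm_num)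
  have := hII.comp_sub_left 1
  simp only [sub_self, sub_zero] at this
  exact (intervalIntegrable_iff_integrableOn_Ioo_of_le (by norm_num)).mp this.symm

/-- Explicit bound in the proof of Theorem 3(b): for every `γ ∈ (0, 1)`, `ε ∈ (0, 1)`,
`δ ∈ (0, 1)`, `y ∈ ℝ`,
`∫_ε^1 g_{y,γ} / ∫₀¹ g_{y,γ} ≤ exp(−y² ε (1 − δ)/2) γ⁻¹ 2 (1 − ε)^{1/2} / (δ ε)`. -/
theorem dhs_posterior_robustness_bound (γ ε δ y : ℝ) (hγ : γ ∈ Set.Ioo (0:ℝ) 1)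
    (hε : ε ∈ Set.Ioo (0:ℝ) 1) (hδ : δ ∈ Set.Ioo (0:ℝ) 1) :
    (∫ κ in Set.Ioo ε 1, gPost y γ κ) / (∫ κ in Set.Ioo (0:ℝ) 1, gPost y γ κ)
      ≤ Real.exp (-y ^ 2 * ε * (1 - δ) / 2) * γ⁻¹ * 2 * (1 - ε) ^ ((1:ℝ)/2) / (δ * ε) := by
  obtain ⟨hγ0, hγ1⟩ := hγ
  obtain ⟨hε0, hε1⟩ := hε
  obtain ⟨hδ0, hδ1⟩ := hδ
  have hy2 : (0:ℝ) ≤ y ^ 2 := sq_nonneg y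
  have hmeas : Measurable (gPost y γ) := by
    unfold gPost
    exact ((((measurable_const.sub measurable_id).pow_const (-(1:ℝ)/2))).mul
      ((measurable_const.add (measurable_const.mul measurable_id)).inv)).mul
      (Real.measurable_exp.comp ((measurable_const.mul measurable_id).div_const 2))
  -- basic pointwise facts on (0,1)
  have hBpos : ∀ κ ∈ Set.Ioo (0:ℝ) 1, 0 < 1 + (γ - 1) * κ := by
    intro κ hκ
    nlinarith [hκ.1, hκ.2]
  have hBleγ : ∀ κ ∈ Set.Ioo (0:ℝ) 1, γ ≤ 1 + (γ - 1) * κ := by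
    intro κ hκ
    nlinarith [hκ.1, hκ.2]
  have hApos : ∀ κ ∈ Set.Ioo (0:ℝ) 1, 0 < (1 - κ) ^ (-(1:ℝ)/2) := by
    intro κ hκ
    exact Real.rpow_pos_of_pos (by linarith [hκ.2]) _
  have hgnonneg : ∀ κ ∈ Set.Ioo (0:ℝ) 1, 0 ≤ gPost y γ κ := by
    intro κ hκ
    unfold gPost
    have := hApos κ hκ
    have := hBpos κ hκ
    positivity
  have hgbound : ∀ κ ∈ Set.Ioo (0:ℝ) 1,
      gPost y γ κ ≤ γ⁻¹ * (1 - κ) ^ (-(1:ℝ)/2) := by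
    intro κ hκ
    unfold gPost
    have hA := hApos κ hκ
    have hB := hBpos κ hκ
    have hB2 : (1 + (γ - 1) * κ)⁻¹ ≤ γ⁻¹ := by
      exact inv_anti₀ hγ0 (hBleγ κ hκ)
    have hC : Real.exp (-y ^ 2 * κ / 2) ≤ 1 := by
      rw [Real.exp_le_one_iff]
      have := hκ.1; nlinarith
    calc (1 - κ) ^ (-(1:ℝ)/2) * (1 + (γ - 1) * κ)⁻¹ * Real.exp (-y ^ 2 * κ / 2)
        ≤ (1 - κ) ^ (-(1:ℝ)/2) * γ⁻¹ * 1 := by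
          apply mul_le_mul _ hC (Real.exp_nonneg _) (by positivity)
          exact mul_le_mul_of_nonneg_left hB2 hA.le
      _ = γ⁻¹ * (1 - κ) ^ (-(1:ℝ)/2) := by ring
  -- integrability of gPost on (0,1)
  have hgInt : IntegrableOn (gPost y γ) (Set.Ioo (0:ℝ) 1) := by
    apply (hIntH.const_mul γ⁻¹).mono' hmeas.aestronglyMeasurable.restrict
    filter_upwards [ae_restrict_mem measurableSet_Ioo] with κ hκ
    rw [Real.norm_eq_abs, abs_of_nonneg (hgnonneg κ hκ)]
    exact hgbound κ hκ
  -- value of ∫ (1-κ)^(-1/2) on (ε,1)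
  have hval : ∫ κ in Set.Ioo ε 1, (1 - κ) ^ (-(1:ℝ)/2) = 2 * (1 - ε) ^ ((1:ℝ)/2) := by
    rw [← MeasureTheory.integral_Ioc_eq_integral_Ioo,
      ← intervalIntegral.integral_of_le hε1.le]
    rw [show (fun κ : ℝ => (1 - κ) ^ (-(1:ℝ)/2)) = fun κ => (fun x : ℝ => x ^ (-(1:ℝ)/2)) (1 - κ) from rfl]
    rw [intervalIntegral.integral_comp_sub_left (fun x : ℝ => x ^ (-(1:ℝ)/2)) 1]
    rw [sub_self]
    rw [integral_rpow (Or.inl (by norm_num))]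
    rw [Real.zero_rpow (by norm_num)]
    norm_num
    ring
  -- numerator bound
  set C1 : ℝ := Real.exp (-y ^ 2 * ε / 2) * γ⁻¹ * (2 * (1 - ε) ^ ((1:ℝ)/2)) with hC1
  have hsub : Set.Ioo ε 1 ⊆ Set.Ioo (0:ℝ) 1 := Set.Ioo_subset_Ioo hε0.le le_rfl
  have hNum : (∫ κ in Set.Ioo ε 1, gPost y γ κ) ≤ C1 := by
    have h1 : (∫ κ in Set.Ioo ε 1, gPost y γ κ)
        ≤ ∫ κ in Set.Ioo ε 1, (Real.exp (-y ^ 2 * ε / 2) * γ⁻¹) * (1 - κ) ^ (-(1:ℝ)/2) := by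
      apply setIntegral_mono_on (hgInt.mono_set hsub)
        ((hIntH.mono_set hsub).const_mul _) measurableSet_Ioo
      intro κ hκ
      have hκ' : κ ∈ Set.Ioo (0:ℝ) 1 := hsub hκ
      have hA := hApos κ hκ'
      have hB2 : (1 + (γ - 1) * κ)⁻¹ ≤ γ⁻¹ := inv_anti₀ hγ0 (hBleγ κ hκ')
      have hC : Real.exp (-y ^ 2 * κ / 2) ≤ Real.exp (-y ^ 2 * ε / 2) := by
        apply Real.exp_le_exp.mpr
        have := hκ.1
        nlinarith
      have hBpos' := hBpos κ hκ'
      calc gPost y γ κ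
          = (1 - κ) ^ (-(1:ℝ)/2) * (1 + (γ - 1) * κ)⁻¹ * Real.exp (-y ^ 2 * κ / 2) := rfl
        _ ≤ (1 - κ) ^ (-(1:ℝ)/2) * γ⁻¹ * Real.exp (-y ^ 2 * ε / 2) := by
            apply mul_le_mul _ hC (Real.exp_nonneg _) (by positivity)
            exact mul_le_mul_of_nonneg_left hB2 hA.le
        _ = (Real.exp (-y ^ 2 * ε / 2) * γ⁻¹) * (1 - κ) ^ (-(1:ℝ)/2) := by ring
    rw [integral_const_mul, hval] at h1
    rw [hC1]
    linarith
  -- denominator lower bound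
  set m : ℝ := Real.exp (-y ^ 2 * (δ * ε) / 2) with hm
  have hδε0 : 0 < δ * ε := mul_pos hδ0 hε0
  have hδε1 : δ * ε < 1 := by nlinarith
  have hsub2 : Set.Ioo (0:ℝ) (δ * ε) ⊆ Set.Ioo (0:ℝ) 1 :=
    Set.Ioo_subset_Ioo le_rfl hδε1.le
  have hDen : (δ * ε) * m ≤ ∫ κ in Set.Ioo (0:ℝ) 1, gPost y γ κ := by
    have h2 : (∫ κ in Set.Ioo (0:ℝ) (δ * ε), gPost y γ κ)
        ≤ ∫ κ in Set.Ioo (0:ℝ) 1, gPost y γ κ := by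
      apply setIntegral_mono_set hgInt
      · filter_upwards [ae_restrict_mem measurableSet_Ioo] with κ hκ
        exact hgnonneg κ hκ
      · exact HasSubset.Subset.eventuallyLE hsub2
    have h3 : (∫ κ in Set.Ioo (0:ℝ) (δ * ε), (m : ℝ))
        ≤ ∫ κ in Set.Ioo (0:ℝ) (δ * ε), gPost y γ κ := by
      apply setIntegral_mono_on ((integrableOn_const_iff (by simp)).mpr (Or.inr (by simp)))
        (hgInt.mono_set hsub2) measurableSet_Ioo
      intro κ hκ
      have hκ' : κ ∈ Set.Ioo (0:ℝ) 1 := hsub2 hκ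
      have hA1 : (1:ℝ) ≤ (1 - κ) ^ (-(1:ℝ)/2) := by
        apply Real.one_le_rpow_of_pos_of_le_one_of_nonpos
        · linarith [hκ'.2]
        · linarith [hκ'.1]
        · norm_num
      have hB1 : (1:ℝ) ≤ (1 + (γ - 1) * κ)⁻¹ := by
        rw [le_inv_comm₀ one_pos (hBpos κ hκ')]
        nlinarith [hκ'.1]
      have hC1' : m ≤ Real.exp (-y ^ 2 * κ / 2) := by
        apply Real.exp_le_exp.mpr
        have := hκ.2
        nlinarith
      calc m = 1 * 1 * m := by ring
        _ ≤ (1 - κ) ^ (-(1:ℝ)/2) * (1 + (γ - 1) * κ)⁻¹ * Real.exp (-y ^ 2 * κ / 2) := by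
            apply mul_le_mul (mul_le_mul hA1 hB1 zero_le_one (by positivity)) hC1'
              (Real.exp_nonneg _) (by positivity)
        _ = gPost y γ κ := rfl
    have h4 : (∫ κ in Set.Ioo (0:ℝ) (δ * ε), (m : ℝ)) = (δ * ε) * m := by
      simp [Real.volume_Ioo, ENNReal.toReal_ofReal hδε0.le, smul_eq_mul, hδε0.le]
    linarith
  -- combine
  have hNnn : 0 ≤ ∫ κ in Set.Ioo ε 1, gPost y γ κ := by
    apply setIntegral_nonneg measurableSet_Ioo
    intro κ hκ; exact hgnonneg κ (hsub hκ)
  have hcpos : 0 < (δ * ε) * m := mul_pos hδε0 (Real.exp_pos _)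
  have hmain : (∫ κ in Set.Ioo ε 1, gPost y γ κ) / (∫ κ in Set.Ioo (0:ℝ) 1, gPost y γ κ)
      ≤ C1 / ((δ * ε) * m) := by
    have hr : (0:ℝ) ≤ (1 - ε) ^ ((1:ℝ)/2) := Real.rpow_nonneg (by linarith) _
    apply div_le_div₀ (by rw [hC1]; positivity) hNum hcpos hDen
  refine hmain.trans_eq ?_
  rw [hC1, hm]
  rw [show -y ^ 2 * ε / 2 = -y ^ 2 * ε * (1 - δ) / 2 + -y ^ 2 * (δ * ε) / 2 by ring,
    Real.exp_add]
  have hexp : Real.exp (-y ^ 2 * (δ * ε) / 2) ≠ 0 := (Real.exp_pos _).ne'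
  field_simp
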